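/- Flow (semigroup) property of the negative reflection map (Proposition on the reflection map, part (ii)): Let r0, z ∈ ℝ and let β : ℝ → ℝ be bounded on [r0, r] for every r ≥ r0. Fix r' ≥ r0 and set y = (Γ^{−,z}β)(r'). Then for every r ≥ r', (Γ^{−,z}β)(r) = y + β(r) − β(r') − sup_{v ∈ [r', r]} max((y + β(v) − β(r')) − z, 0); that is, on [r', ∞) the path (Γ^{−,z}β) coincides with the negative reflection map at z, based at r', applied to the shifted path u ↦ y + β(u) − β(r'). -/

import Mathlib

/-- Negative reflection map at level `z`, based at `r0`:
`(Γ^{−,z}β)(r) = β(r) − sup_{u ∈ [r0, r]} max(β(u) − z, 0)`. -/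
noncomputable def negRefl (r0 z : ℝ) (β : ℝ → ℝ) (r : ℝ) : ℝ :=
  β r - sSup ((fun u => max (β u - z) 0) '' Set.Icc r0 r)

/-- Flow (semigroup) property of the negative reflection map: for `r0 ≤ r' ≤ r`, with
`y = (Γ^{−,z}β)(r')`,
`(Γ^{−,z}β)(r) = y + β(r) − β(r') − sup_{v ∈ [r', r]} max((y + β(v) − β(r')) − z, 0)`,
i.e. on `[r', ∞)` the reflected path coincides with the negative reflection map at `z` based
at `r'` applied to the shifted path `u ↦ y + β(u) − β(r')`. -/
theorem negRefl_flow (r0 z : ℝ) (β : ℝ → ℝ)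
    (hβ : ∀ r, r0 ≤ r → ∃ M, ∀ u ∈ Set.Icc r0 r, |β u| ≤ M)
    (r' : ℝ) (hr' : r0 ≤ r') (y : ℝ) (hy : y = negRefl r0 z β r') :
    ∀ r, r' ≤ r →
      negRefl r0 z β r = negRefl r' z (fun u => y + β u - β r') r := by
  intro r hr
  have hr0r : r0 ≤ r := hr'.trans hr
  obtain ⟨M, hM⟩ := hβ r hr0r
  set S' : ℝ := sSup ((fun u => max (β u - z) 0) '' Set.Icc r0 r') with hS'def
  have hyval : y = β r' - S' := hy
  -- nonemptiness
  have hne1 : ((fun u => max (β u - z) 0) '' Set.Icc r0 r').Nonempty :=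
    (Set.nonempty_Icc.2 hr').image _
  have hne2 : ((fun u => max (β u - z) 0) '' Set.Icc r0 r).Nonempty :=
    (Set.nonempty_Icc.2 hr0r).image _
  -- bounded above
  have hbdd2 : BddAbove ((fun u => max (β u - z) 0) '' Set.Icc r0 r) := by
    refine ⟨max (M + |z|) 0, ?_⟩
    rintro x ⟨u, hu, rfl⟩
    have h1 := abs_le.1 (hM u hu)
    have h2 := neg_abs_le z
    exact max_le_max (by linarith) le_rfl
  have hbdd1 : BddAbove ((fun u => max (β u - z) 0) '' Set.Icc r0 r') :=
    hbdd2.mono (Set.image_mono (Set.Icc_subset_Icc le_rfl hr))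
  have hS0 : 0 ≤ S' := by
    have := le_csSup hbdd1 (Set.mem_image_of_mem _ (Set.mem_Icc.2 ⟨le_rfl, hr'⟩))
    exact le_trans (le_max_right (β r0 - z) 0) this
  -- rewrite the shifted function
  have hfun : (fun v => max ((fun u => y + β u - β r') v - z) 0) =
      fun v => max (β v - S' - z) 0 := by
    funext v
    rw [hyval]
    ring_nf
  set B : Set ℝ := (fun v => max (β v - S' - z) 0) '' Set.Icc r' r with hBdef
  have hne3 : B.Nonempty := (Set.nonempty_Icc.2 hr).image _
  have hbdd3 : BddAbove B := by
    refine ⟨max (M + |S'| + |z|) 0, ?_⟩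
    rintro x ⟨v, hv, rfl⟩
    have h1 := abs_le.1 (hM v ⟨hr'.trans hv.1, hv.2⟩)
    have h2 := neg_abs_le z
    have h3 := neg_abs_le S'
    exact max_le_max (by linarith) le_rfl
  have hB0 : 0 ≤ sSup B := by
    have := le_csSup hbdd3 (Set.mem_image_of_mem _ (Set.mem_Icc.2 ⟨le_rfl, hr⟩))
    exact le_trans (le_max_right (β r' - S' - z) 0) this
  have hS'le : S' ≤ sSup ((fun u => max (β u - z) 0) '' Set.Icc r0 r) :=
    csSup_le_csSup hbdd2 hne1 (Set.image_mono (Set.Icc_subset_Icc le_rfl hr))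
  have key : sSup ((fun u => max (β u - z) 0) '' Set.Icc r0 r) = S' + sSup B := by
    apply le_antisymm
    · apply csSup_le hne2
      rintro x ⟨u, hu, rfl⟩
      rcases le_total u r' with hur' | hur'
      · have h1 : max (β u - z) 0 ≤ S' :=
          le_csSup hbdd1 (Set.mem_image_of_mem _ (Set.mem_Icc.2 ⟨hu.1, hur'⟩))
        linarith
      · have h1 : max (β u - S' - z) 0 ≤ sSup B :=
          le_csSup hbdd3 (Set.mem_image_of_mem _ (Set.mem_Icc.2 ⟨hur', hu.2⟩))
        have h2 : max (β u - z) 0 ≤ S' + max (β u - S' - z) 0 :=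
          max_le (by linarith [le_max_left (β u - S' - z) 0]) (by positivity)
        linarith
    · have h1 : sSup B ≤ sSup ((fun u => max (β u - z) 0) '' Set.Icc r0 r) - S' := by
        apply csSup_le hne3
        rintro x ⟨v, hv, rfl⟩
        dsimp only
        rcases le_total (β v - S' - z) 0 with hc | hc
        · rw [max_eq_right hc]; linarith
        · have h2 : max (β v - z) 0 ≤ sSup ((fun u => max (β u - z) 0) '' Set.Icc r0 r) :=
            le_csSup hbdd2 (Set.mem_image_of_mem _ (Set.mem_Icc.2 ⟨hr'.trans hv.1, hv.2⟩))
          have h3 := le_max_left (β v - z) 0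
          rw [max_eq_left hc]
          linarith
      linarith
  show β r - _ = y + β r - β r' - sSup ((fun v => max ((fun u => y + β u - β r') v - z) 0) '' Set.Icc r' r)
  rw [hfun, ← hBdef, hyval, key]
  ring
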